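/- If u, v ∈ C and C is a maximal clique in G(V, E ∪ {uv}), then there exists a maximal clique C_u in G(V,E) with u ∈ C_u such that C = (C_u ∩ N(v)) ∪ {u, v}, where N(v) is the closed neighborhood of v in G(V,E). -/

import Mathlib

def insEdge {V : Type*} (G : SimpleGraph V) (u v : V) : SimpleGraph V :=
  G ⊔ SimpleGraph.fromEdgeSet {s(u, v)}

def IsMaxClique {V : Type*} (G : SimpleGraph V) (C : Set V) : Prop :=
  G.IsClique C ∧ ∀ D : Set V, G.IsClique D → C ⊆ D → C = D

/-- Closed neighborhood of `w` in `G`. -/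
def closedNbhd {V : Type*} (G : SimpleGraph V) (w : V) : Set V :=
  {x | x = w ∨ G.Adj w x}

lemma insEdge_adj {V : Type*} (G : SimpleGraph V) (u v a b : V) :
    (insEdge G u v).Adj a b ↔ G.Adj a b ∨ (s(a, b) = s(u, v) ∧ a ≠ b) := by
  simp [insEdge, SimpleGraph.fromEdgeSet_adj]

/-- If `u, v ∈ C` and `C` is a maximal clique in `G(V, E ∪ {uv})`, then there exists a maximal
clique `C_u` in `G(V,E)` with `u ∈ C_u` such that `C = (C_u ∩ N(v)) ∪ {u, v}`. -/
theorem stmt_4 {V : Type*} [Fintype V] (G : SimpleGraph V) (u v : V) (huv : u ≠ v) (C : Set V)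
    (hu : u ∈ C) (hv : v ∈ C) (hC : IsMaxClique (insEdge G u v) C) :
    ∃ Cu : Set V, IsMaxClique G Cu ∧ u ∈ Cu ∧
      C = (Cu ∩ closedNbhd G v) ∪ {u, v} := by
  classical
  obtain ⟨hCcl, hCmax⟩ := hC
  -- C \ {v} is a clique in G
  have hS : G.IsClique (C \ {v}) := by
    intro a ha b hb hab
    have := hCcl ha.1 hb.1 hab
    rw [insEdge_adj] at this
    rcases this with h | ⟨he, _⟩
    · exact h
    · exfalso
      rw [Sym2.eq_iff] at he
      rcases he with ⟨rfl, rfl⟩ | ⟨rfl, rfl⟩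
      · exact hb.2 rfl
      · exact ha.2 rfl
  -- extend to a maximal clique
  set s : Set (Set V) := {D | G.IsClique D ∧ C \ {v} ⊆ D}
  have hsfin : s.Finite := Set.toFinite s
  have hsne : s.Nonempty := ⟨C \ {v}, hS, subset_rfl⟩
  obtain ⟨Cu, ⟨hCucl, hSCu⟩, hmax⟩ := Set.Finite.exists_maximal hsfin hsne
  have hCuMax : IsMaxClique G Cu := by
    refine ⟨hCucl, fun D hD hsub => ?_⟩
    exact le_antisymm hsub (hmax ⟨hD, hSCu.trans hsub⟩ hsub)
  have huCu : u ∈ Cu := hSCu ⟨hu, huv⟩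
  refine ⟨Cu, hCuMax, huCu, ?_⟩
  ext x
  constructor
  · intro hx
    by_cases hxu : x = u
    · exact Or.inr (Or.inl hxu)
    by_cases hxv : x = v
    · exact Or.inr (Or.inr hxv)
    refine Or.inl ⟨hSCu ⟨hx, hxv⟩, ?_⟩
    -- x ∈ closedNbhd G v : G.Adj v x
    have := hCcl hv hx (fun h => hxv h.symm)
    rw [insEdge_adj] at this
    rcases this with h | ⟨he, _⟩
    · exact Or.inr h
    · exfalso
      rw [Sym2.eq_iff] at he
      rcases he with ⟨hvu, _⟩ | ⟨_, hxu'⟩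
      · exact huv hvu.symm
      · exact hxu hxu'
  · rintro (⟨hxCu, hxN⟩ | hx)
    · rcases hxN with rfl | hadj
      · exact hv
      -- x ∈ Cu, G.Adj v x; show x ∈ C via maximality of C
      by_cases hxC : x ∈ C
      · exact hxC
      have hclq : (insEdge G u v).IsClique (C ∪ {x}) := by
        rintro a (ha | rfl) b (hb | rfl) hab
        · exact hCcl ha hb hab
        · -- b = x, a ∈ C
          rw [insEdge_adj]
          by_cases hav : a = v
          · subst hav; exact Or.inl hadj
          · refine Or.inl ?_
            exact hCucl (hSCu ⟨ha, hav⟩) hxCu hab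
        · -- a = x, b ∈ C
          rw [insEdge_adj]
          by_cases hbv : b = v
          · subst hbv; exact Or.inl hadj.symm
          · exact Or.inl (hCucl hxCu (hSCu ⟨hb, hbv⟩) hab)
        · exact absurd rfl hab
      have := hCmax (C ∪ {x}) hclq Set.subset_union_left
      exact absurd (this ▸ (Or.inr rfl : x ∈ C ∪ {x})) hxC
    · rcases hx with rfl | rfl
      · exact hu
      · exact hv
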